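/- Let u ∈ ℂ with |u| = 1 and u³ ≠ 1, let ω = (−1+i√3)/2, and let τ, τ′ ∈ ℂ. Suppose (A,B) and (A′,B′) are two pairs of 3×3 complex matrices such that: A and A′ are diagonalizable with characteristic polynomial (X−u²)(X−conj(u))²; B and B′ have characteristic polynomial (X−1)(X−ω)(X−conj(ω)); tr(AB) = tr(A′B′) = τ and tr(AB⁻¹) = tr(A′B′⁻¹) = τ′; and neither pair (A,B) nor (A′,B′) has a common invariant subspace of ℂ³ other than 0 and ℂ³. Then the pairs are simultaneously conjugate: there exists S ∈ GL(3,ℂ) with A′ = S A S⁻¹ and B′ = S B S⁻¹. -/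

import Mathlib

open Matrix Polynomial


lemma aux_eval_charpoly {n : Type*} [DecidableEq n] [Fintype n] (M : Matrix n n ℂ) (μ : ℂ) :
    M.charpoly.eval μ = (μ • (1 : Matrix n n ℂ) - M).det := by
  rw [Matrix.charpoly, ← Polynomial.coe_evalRingHom, RingHom.map_det]
  congr 1
  ext i j
  by_cases h : i = j <;>
    simp [h, charmatrix_apply, Matrix.one_apply, Matrix.diagonal_apply, Matrix.smul_apply]

lemma aux_charpoly_conj {n : Type*} [DecidableEq n] [Fintype n] (P D : Matrix n n ℂ)
    (hP : IsUnit P.det) : (P * D * P⁻¹).charpoly = D.charpoly := by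
  unfold Matrix.charpoly
  have hX : (Matrix.diagonal fun _ : n => (X : ℂ[X])) = (X : ℂ[X]) • (1 : Matrix n n ℂ[X]) := by
    ext i j
    by_cases h : i = j <;> simp [h, Matrix.one_apply, Matrix.diagonal_apply]
  have h1 : charmatrix (P * D * P⁻¹) = P.map C * charmatrix D * P⁻¹.map C := by
    unfold charmatrix
    rw [Matrix.mul_sub, Matrix.sub_mul]
    congr 1
    · rw [Matrix.scalar_apply, hX, mul_smul_comm, smul_mul_assoc, mul_one, ← Matrix.map_mul, Matrix.mul_nonsing_inv _ hP]
      simp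
    · simp [Matrix.map_mul]
  rw [h1, Matrix.det_mul, Matrix.det_mul, mul_comm, ← mul_assoc, ← Matrix.det_mul, ← Matrix.map_mul,
    Matrix.nonsing_inv_mul _ hP]
  simp

lemma aux_eigen_diag (B : Matrix (Fin 3) (Fin 3) ℂ) (μ : Fin 3 → ℂ)
    (hμ : Function.Injective μ)
    (hcp : B.charpoly = (X - C (μ 0)) * (X - C (μ 1)) * (X - C (μ 2))) :
    ∃ Q : Matrix (Fin 3) (Fin 3) ℂ, IsUnit Q.det ∧ B = Q * Matrix.diagonal μ * Q⁻¹ := by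
  have hdet : ∀ i, (μ i • (1 : Matrix (Fin 3) (Fin 3) ℂ) - B).det = 0 := by
    intro i
    rw [← aux_eval_charpoly, hcp]
    fin_cases i <;> simp
  have hex : ∀ i, ∃ x : Fin 3 → ℂ, x ≠ 0 ∧ B.mulVec x = μ i • x := by
    intro i
    obtain ⟨x, hx, hx0⟩ := (Matrix.exists_mulVec_eq_zero_iff).2 (hdet i)
    refine ⟨x, hx, ?_⟩
    have := hx0
    rw [Matrix.sub_mulVec, sub_eq_zero] at this
    rw [← this, Matrix.smul_mulVec, Matrix.one_mulVec]
  choose x hx0 hxB using hex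
  have hli : LinearIndependent ℂ x := by
    apply Module.End.eigenvectors_linearIndependent' (Matrix.mulVecLin B) μ hμ
    intro i
    exact ⟨Module.End.mem_eigenspace_iff.2 (by simpa using hxB i), hx0 i⟩
  set Q : Matrix (Fin 3) (Fin 3) ℂ := Matrix.of fun i j => x j i with hQ
  have hQdet : IsUnit Q.det := by
    rw [isUnit_iff_ne_zero]
    intro h
    obtain ⟨c, hc0, hcne⟩ := (Matrix.exists_mulVec_eq_zero_iff).2 h
    apply hc0
    have := Fintype.linearIndependent_iff.1 hli c ?_
    · funext j; exact this j
    · funext i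
      simp only [Finset.sum_apply, Pi.smul_apply, smul_eq_mul, Pi.zero_apply]
      have h2 := congrFun hcne i
      simp only [Matrix.mulVec, dotProduct, hQ, Matrix.of_apply, Pi.zero_apply] at h2
      rw [← h2]
      exact Finset.sum_congr rfl fun j _ => mul_comm _ _
  have hBQ : B * Q = Q * Matrix.diagonal μ := by
    ext i j
    rw [Matrix.mul_diagonal]
    have : (B.mulVec (x j)) i = μ j * (x j) i := by rw [hxB]; simp
    simpa [Matrix.mul_apply, Matrix.mulVec, dotProduct, hQ, mul_comm] using this
  refine ⟨Q, hQdet, ?_⟩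
  calc B = B * Q * Q⁻¹ := by rw [Matrix.mul_nonsing_inv_cancel_right _ _ hQdet]
  _ = Q * Matrix.diagonal μ * Q⁻¹ := by rw [hBQ]


lemma aux_triple (d : Fin 3 → ℂ) (a b : ℂ) (hab : a ≠ b)
    (h : ({d 0, d 1, d 2} : Multiset ℂ) = {a, b, b}) :
    ∃ j, d j = a ∧ ∀ i, i ≠ j → d i = b := by
  have hm : ∀ i : Fin 3, d i = a ∨ d i = b := by
    intro i
    have hmem : d i ∈ ({a, b, b} : Multiset ℂ) := by
      rw [← h]; fin_cases i <;> simp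
    simp only [Multiset.insert_eq_cons, Multiset.mem_cons, Multiset.mem_singleton] at hmem
    tauto
  have hcount := congrArg (Multiset.count a) h
  simp only [Multiset.insert_eq_cons, Multiset.count_cons, Multiset.count_singleton] at hcount
  rcases hm 0 with h0 | h0 <;> rcases hm 1 with h1 | h1 <;> rcases hm 2 with h2 | h2 <;>
    simp [h0, h1, h2, hab, Ne.symm hab] at hcount <;>
    first
      | (exact ⟨0, h0, by intro i hi; fin_cases i <;> simp_all⟩)
      | (exact ⟨1, h1, by intro i hi; fin_cases i <;> simp_all⟩)
      | (exact ⟨2, h2, by intro i hi; fin_cases i <;> simp_all⟩)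

lemma aux_charpoly_diagonal (d : Fin 3 → ℂ) :
    (Matrix.diagonal d).charpoly = (X - C (d 0)) * (X - C (d 1)) * (X - C (d 2)) := by
  have h1 : charmatrix (Matrix.diagonal d) = Matrix.diagonal (fun i => X - C (d i)) := by
    ext i j
    by_cases h : i = j <;> simp [charmatrix_apply, h, Matrix.diagonal_apply]
  rw [Matrix.charpoly, h1, Matrix.det_diagonal, Fin.prod_univ_three]

lemma aux_outer (P : Matrix (Fin 3) (Fin 3) ℂ) (R : Matrix (Fin 3) (Fin 3) ℂ) (j : Fin 3) :
    P * Matrix.single j j 1 * R = vecMulVec (fun i => P i j) (fun k => R j k) := by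
  ext i k
  simp only [Matrix.mul_apply, Matrix.single, Matrix.vecMulVec_apply, Matrix.of_apply,
    ite_and, mul_ite, mul_one, mul_zero, ite_mul, zero_mul]
  simp [Finset.sum_ite_eq, Finset.sum_ite_eq', Finset.sum_mul, ite_mul, zero_mul]

lemma aux_A_structure (A : Matrix (Fin 3) (Fin 3) ℂ) (a b : ℂ) (hab : a ≠ b)
    (hdiag : ∃ P : Matrix (Fin 3) (Fin 3) ℂ, IsUnit P.det ∧
      ∃ d : Fin 3 → ℂ, A = P * Matrix.diagonal d * P⁻¹)
    (hcp : A.charpoly = (X - C a) * (X - C b) ^ 2) :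
    ∃ v w : Fin 3 → ℂ, w ⬝ᵥ v = 1 ∧
      A = b • (1 : Matrix (Fin 3) (Fin 3) ℂ) + (a - b) • vecMulVec v w := by
  obtain ⟨P, hP, d, rfl⟩ := hdiag
  have hcd : (X - C (d 0)) * (X - C (d 1)) * (X - C (d 2)) = (X - C a) * (X - C b) ^ 2 := by
    rw [← aux_charpoly_diagonal, ← aux_charpoly_conj P _ hP]; exact hcp
  have h1 : (({d 0, d 1, d 2} : Multiset ℂ).map fun r => X - C r).prod
      = (({a, b, b} : Multiset ℂ).map fun r => X - C r).prod := by
    simp only [Multiset.insert_eq_cons, Multiset.map_cons, Multiset.prod_cons,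
      Multiset.map_singleton, Multiset.prod_singleton]
    linear_combination hcd
  have h2 : ({d 0, d 1, d 2} : Multiset ℂ) = {a, b, b} := by
    have h3 := congrArg Polynomial.roots h1
    rwa [Polynomial.roots_multiset_prod_X_sub_C, Polynomial.roots_multiset_prod_X_sub_C] at h3
  obtain ⟨j, hj, hjb⟩ := aux_triple d a b hab h2
  have hdg : Matrix.diagonal d
      = b • (1 : Matrix (Fin 3) (Fin 3) ℂ) + (a - b) • Matrix.single j j 1 := by
    ext i k
    by_cases h : i = k
    · subst h
      by_cases h2 : i = j
      · subst h2; simp [hj]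
      · simp [Matrix.single, h2, hjb i h2, Matrix.one_apply, Ne.symm h2]
    · simp only [Matrix.diagonal_apply_ne _ h, Matrix.add_apply, Matrix.smul_apply,
        Matrix.one_apply_ne h, Matrix.single, Matrix.of_apply, smul_eq_mul]
      rw [if_neg (by rintro ⟨rfl, rfl⟩; exact h rfl)]
      ring
  refine ⟨fun i => P i j, fun k => P⁻¹ j k, ?_, ?_⟩
  · have h4 := Matrix.nonsing_inv_mul P hP
    have : (P⁻¹ * P) j j = 1 := by rw [h4]; simp [Matrix.one_apply]
    simpa [dotProduct, Matrix.mul_apply] using this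
  · rw [hdg, Matrix.mul_add, Matrix.add_mul, ← aux_outer P P⁻¹ j]
    congr 1
    · rw [mul_smul_comm, smul_mul_assoc, mul_one, Matrix.mul_nonsing_inv _ hP]
    · rw [mul_smul_comm, smul_mul_assoc]


lemma aux_conj_outer (M N : Matrix (Fin 3) (Fin 3) ℂ) (v w : Fin 3 → ℂ) :
    M * vecMulVec v w * N = vecMulVec (M *ᵥ v) (w ᵥ* N) := by
  rw [Matrix.vecMulVec_eq (Fin 1), Matrix.vecMulVec_eq (Fin 1), Matrix.replicateCol_mulVec,
    Matrix.replicateRow_vecMul]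
  rw [Matrix.mul_assoc, Matrix.mul_assoc, Matrix.mul_assoc]

lemma aux_vecMulVec_mulVec (v w x : Fin 3 → ℂ) :
    vecMulVec v w *ᵥ x = (w ⬝ᵥ x) • v := by
  funext i
  simp only [Matrix.mulVec, Matrix.vecMulVec_apply, dotProduct, Pi.smul_apply,
    smul_eq_mul, Finset.sum_mul, Finset.mul_sum]
  exact Finset.sum_congr rfl fun j _ => by ring

lemma aux_trace_conj (S M : Matrix (Fin 3) (Fin 3) ℂ) (hS : IsUnit S.det) :
    (S * M * S⁻¹).trace = M.trace := by
  rw [Matrix.trace_mul_comm, ← Matrix.mul_assoc, Matrix.nonsing_inv_mul _ hS, Matrix.one_mul]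

lemma aux_omega (ω : ℂ) (hω : ω = (-1 + Complex.I * Real.sqrt 3) / 2) :
    starRingEnd ℂ ω = ω ^ 2 ∧ 1 + ω + ω ^ 2 = 0 := by
  have hs : ((Real.sqrt 3 : ℝ) : ℂ) ^ 2 = 3 := by
    norm_cast
    rw [Real.sq_sqrt]; norm_num
  have hconj : starRingEnd ℂ ω = (-1 - Complex.I * Real.sqrt 3) / 2 := by
    rw [hω, map_div₀, map_add, map_neg, _root_.map_one, _root_.map_mul, Complex.conj_I,
      Complex.conj_ofReal, map_ofNat]
    ring
  have hsum : 1 + ω + ω ^ 2 = 0 := by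
    rw [hω]
    linear_combination (((Real.sqrt 3 : ℝ) : ℂ) ^ 2 / 4) * Complex.I_sq + (-1 / 4 : ℂ) * hs
  refine ⟨?_, hsum⟩
  rw [hconj, hω]
  linear_combination (-((Real.sqrt 3 : ℝ) : ℂ) ^ 2 / 4) * Complex.I_sq + (1 / 4 : ℂ) * hs

lemma aux_u (u : ℂ) (hu : ‖u‖ = 1) (hu3 : u ^ 3 ≠ 1) :
    u * starRingEnd ℂ u = 1 ∧ u ^ 2 - starRingEnd ℂ u ≠ 0 := by
  have h1 : u * starRingEnd ℂ u = 1 := by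
    rw [Complex.mul_conj]
    norm_cast
    rw [Complex.normSq_eq_norm_sq, hu]; norm_num
  refine ⟨h1, fun h => hu3 ?_⟩
  linear_combination u * h + h1


lemma aux_transport (A B : Matrix (Fin 3) (Fin 3) ℂ) (Q : Matrix (Fin 3) (Fin 3) ℂ)
    (hQ : IsUnit Q.det)
    (hirr : ∀ W : Submodule ℂ (Fin 3 → ℂ),
      (∀ x ∈ W, A.mulVec x ∈ W) → (∀ x ∈ W, B.mulVec x ∈ W) → W = ⊥ ∨ W = ⊤) :
    ∀ W : Submodule ℂ (Fin 3 → ℂ),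
      (∀ x ∈ W, (Q⁻¹ * A * Q).mulVec x ∈ W) → (∀ x ∈ W, (Q⁻¹ * B * Q).mulVec x ∈ W) →
        W = ⊥ ∨ W = ⊤ := by
  have hinj : Function.Injective (Matrix.mulVecLin Q) := by
    intro x y hxy
    have h2 := congrArg (fun z => Q⁻¹ *ᵥ z) hxy
    simpa [Matrix.mulVecLin_apply, Matrix.mulVec_mulVec, Matrix.nonsing_inv_mul _ hQ] using h2
  have hcancel : ∀ M : Matrix (Fin 3) (Fin 3) ℂ, Q * (Q⁻¹ * M * Q) = M * Q := by
    intro M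
    calc Q * (Q⁻¹ * M * Q) = Q * Q⁻¹ * M * Q := by simp only [Matrix.mul_assoc]
    _ = M * Q := by rw [Matrix.mul_nonsing_inv _ hQ, Matrix.one_mul]
  intro W hWA hWB
  have h3 := hirr (W.map (Matrix.mulVecLin Q)) ?_ ?_
  · rcases h3 with h3 | h3
    · left
      have h4 : W ≤ LinearMap.ker (Matrix.mulVecLin Q) := by
        intro x hx
        have h5 : Matrix.mulVecLin Q x ∈ W.map (Matrix.mulVecLin Q) := ⟨x, hx, rfl⟩
        rw [h3] at h5
        simpa [LinearMap.mem_ker] using h5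
      rw [LinearMap.ker_eq_bot_of_injective hinj] at h4
      exact le_bot_iff.mp h4
    · right
      rw [eq_top_iff]
      rintro z -
      have hz : Matrix.mulVecLin Q z ∈ W.map (Matrix.mulVecLin Q) := by rw [h3]; trivial
      obtain ⟨y, hyW, hy⟩ := hz
      exact (hinj hy) ▸ hyW
  · rintro x ⟨y, hyW, rfl⟩
    refine ⟨(Q⁻¹ * A * Q) *ᵥ y, hWA y hyW, ?_⟩
    show Q *ᵥ _ = A *ᵥ (Q *ᵥ y)
    rw [Matrix.mulVec_mulVec, Matrix.mulVec_mulVec, hcancel]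
  · rintro x ⟨y, hyW, rfl⟩
    refine ⟨(Q⁻¹ * B * Q) *ᵥ y, hWB y hyW, ?_⟩
    show Q *ᵥ _ = B *ᵥ (Q *ᵥ y)
    rw [Matrix.mulVec_mulVec, Matrix.mulVec_mulVec, hcancel]

set_option maxHeartbeats 1000000 in
lemma aux_key (u τ τ' ω : ℂ) (hu : ‖u‖ = 1) (hu3 : u ^ 3 ≠ 1)
    (hω : ω = (-1 + Complex.I * Real.sqrt 3) / 2)
    (A B : Matrix (Fin 3) (Fin 3) ℂ)
    (hAdiag : ∃ P : Matrix (Fin 3) (Fin 3) ℂ, IsUnit P.det ∧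
      ∃ d : Fin 3 → ℂ, A = P * Matrix.diagonal d * P⁻¹)
    (hAcp : A.charpoly = (X - C (u ^ 2)) * (X - C (starRingEnd ℂ u)) ^ 2)
    (hBcp : B.charpoly = (X - C 1) * (X - C ω) * (X - C (starRingEnd ℂ ω)))
    (htr1 : (A * B).trace = τ) (htr2 : (A * B⁻¹).trace = τ')
    (hirr : ∀ W : Submodule ℂ (Fin 3 → ℂ),
      (∀ x ∈ W, A.mulVec x ∈ W) → (∀ x ∈ W, B.mulVec x ∈ W) → W = ⊥ ∨ W = ⊤) :
    ∃ S : Matrix (Fin 3) (Fin 3) ℂ, ∃ c : Fin 3 → ℂ, IsUnit S.det ∧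
      S * A * S⁻¹ = (starRingEnd ℂ u) • (1 : Matrix (Fin 3) (Fin 3) ℂ)
        + (u ^ 2 - starRingEnd ℂ u) • vecMulVec (fun _ => 1) c ∧
      S * B * S⁻¹ = Matrix.diagonal ![1, ω, starRingEnd ℂ ω] ∧
      c 0 + c 1 + c 2 = 1 ∧
      (u ^ 2 - starRingEnd ℂ u) * (c 0 + ω * c 1 + starRingEnd ℂ ω * c 2) = τ ∧
      (u ^ 2 - starRingEnd ℂ u) * (c 0 + starRingEnd ℂ ω * c 1 + ω * c 2) = τ' := by
  obtain ⟨hconj2, hsum⟩ := aux_omega ω hω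
  obtain ⟨huc, hα⟩ := aux_u u hu hu3
  have hω3 : ω ^ 3 = 1 := by linear_combination (ω - 1) * hsum
  have hωω : ω * starRingEnd ℂ ω = 1 := by rw [hconj2]; linear_combination hω3
  have hω1 : ω ≠ 1 := by
    intro h; rw [h] at hsum; norm_num at hsum
  have hωc : ω ≠ starRingEnd ℂ ω := by
    intro h
    rw [hconj2] at h
    have hval : ω = -(1/2) := by linear_combination (hsum + h) / 2
    rw [hval] at h; norm_num at h
  have hωc1 : starRingEnd ℂ ω ≠ 1 := by
    intro h
    rw [hconj2] at h
    have hval : ω = -2 := by linear_combination hsum - h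
    rw [hval] at h; norm_num at h
  have hμinj : Function.Injective (![1, ω, starRingEnd ℂ ω] : Fin 3 → ℂ) := by
    intro i j hij
    fin_cases i <;> fin_cases j <;>
      simp only [Matrix.cons_val_zero, Matrix.cons_val_one, Matrix.head_cons,
        Matrix.cons_val_two, Matrix.tail_cons] at hij <;>
      first
        | rfl
        | exact absurd hij.symm hω1
        | exact absurd hij hω1
        | exact absurd hij.symm hωc1
        | exact absurd hij hωc1
        | exact absurd hij hωc
        | exact absurd hij.symm hωc
  obtain ⟨Q, hQ, hBQ⟩ := aux_eigen_diag B ![1, ω, starRingEnd ℂ ω] hμinj (by simpa using hBcp)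
  have hab : u ^ 2 ≠ starRingEnd ℂ u := sub_ne_zero.mp hα
  obtain ⟨v, w, hwv, hA⟩ := aux_A_structure A (u ^ 2) (starRingEnd ℂ u) hab hAdiag hAcp
  set D : Matrix (Fin 3) (Fin 3) ℂ := Matrix.diagonal ![1, ω, starRingEnd ℂ ω] with hD
  set a : Fin 3 → ℂ := Q⁻¹ *ᵥ v with hadef
  set b : Fin 3 → ℂ := w ᵥ* Q with hbdef
  have hA1 : Q⁻¹ * A * Q = (starRingEnd ℂ u) • (1 : Matrix (Fin 3) (Fin 3) ℂ)
      + (u ^ 2 - starRingEnd ℂ u) • vecMulVec a b := by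
    rw [hA, Matrix.mul_add, Matrix.add_mul]
    congr 1
    · rw [mul_smul_comm, smul_mul_assoc, mul_one, Matrix.nonsing_inv_mul _ hQ]
    · rw [mul_smul_comm, smul_mul_assoc, aux_conj_outer]
  have hB1 : Q⁻¹ * B * Q = D := by
    rw [hBQ, Matrix.mul_assoc Q D Q⁻¹, Matrix.nonsing_inv_mul_cancel_left _ _ hQ,
      Matrix.mul_assoc, Matrix.nonsing_inv_mul _ hQ, Matrix.mul_one]
  have hba : b ⬝ᵥ a = 1 := by
    rw [hadef, hbdef, Matrix.dotProduct_mulVec, Matrix.vecMul_vecMul,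
      Matrix.mul_nonsing_inv _ hQ, Matrix.vecMul_one]
    exact hwv
  have hirr1 := aux_transport A B Q hQ hirr
  -- nonvanishing of b
  have hbne : ∀ i, b i ≠ 0 := by
    intro i hbi
    have hAe : (Q⁻¹ * A * Q) *ᵥ Pi.single i (1 : ℂ) = (starRingEnd ℂ u) • (Pi.single i 1 : Fin 3 → ℂ) := by
      rw [hA1, Matrix.add_mulVec, Matrix.smul_mulVec, Matrix.one_mulVec,
        Matrix.smul_mulVec, aux_vecMulVec_mulVec, dotProduct_single, hbi]
      simp
    have hDe : D *ᵥ Pi.single i (1 : ℂ) = (![1, ω, starRingEnd ℂ ω] i) • (Pi.single i 1 : Fin 3 → ℂ) := by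
      rw [hD, Matrix.diagonal_mulVec_single]
      funext j
      by_cases h : j = i
      · subst h; simp
      · simp [Pi.single_apply, h]
    have hinv1 : ∀ x ∈ Submodule.span ℂ {(Pi.single i 1 : Fin 3 → ℂ)},
        (Q⁻¹ * A * Q) *ᵥ x ∈ Submodule.span ℂ {(Pi.single i 1 : Fin 3 → ℂ)} := by
      intro x hx
      obtain ⟨t, rfl⟩ := Submodule.mem_span_singleton.mp hx
      rw [Matrix.mulVec_smul, hAe]
      exact Submodule.smul_mem _ _ (Submodule.smul_mem _ _ (Submodule.mem_span_singleton_self _))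
    have hinv2 : ∀ x ∈ Submodule.span ℂ {(Pi.single i 1 : Fin 3 → ℂ)},
        (Q⁻¹ * B * Q) *ᵥ x ∈ Submodule.span ℂ {(Pi.single i 1 : Fin 3 → ℂ)} := by
      intro x hx
      obtain ⟨t, rfl⟩ := Submodule.mem_span_singleton.mp hx
      rw [Matrix.mulVec_smul, hB1, hDe]
      exact Submodule.smul_mem _ _ (Submodule.smul_mem _ _ (Submodule.mem_span_singleton_self _))
    rcases hirr1 _ hinv1 hinv2 with h | h
    · have h5 : (Pi.single i 1 : Fin 3 → ℂ) = 0 := Submodule.span_singleton_eq_bot.mp h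
      have h9 := congrFun h5 i
      simp at h9
    · set i' : Fin 3 := if i = 0 then 1 else 0 with hi'
      have hii' : i' ≠ i := by
        fin_cases i <;> simp [hi']
      have h6 : (Pi.single i' 1 : Fin 3 → ℂ) ∈ Submodule.span ℂ {(Pi.single i 1 : Fin 3 → ℂ)} := by
        rw [h]; trivial
      obtain ⟨t, ht⟩ := Submodule.mem_span_singleton.mp h6
      have h9 := congrFun ht i'
      simp [Pi.single_apply, hii', Ne.symm hii'] at h9
  -- nonvanishing of a
  have hane : ∀ i, a i ≠ 0 := by
    intro i hai
    have hinv1 : ∀ x ∈ LinearMap.ker (LinearMap.proj i : (Fin 3 → ℂ) →ₗ[ℂ] ℂ),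
        (Q⁻¹ * A * Q) *ᵥ x ∈ LinearMap.ker (LinearMap.proj i : (Fin 3 → ℂ) →ₗ[ℂ] ℂ) := by
      intro x hx
      simp only [LinearMap.mem_ker, LinearMap.proj_apply] at hx ⊢
      rw [hA1, Matrix.add_mulVec, Matrix.smul_mulVec, Matrix.one_mulVec,
        Matrix.smul_mulVec, aux_vecMulVec_mulVec]
      simp [hx, hai]
    have hinv2 : ∀ x ∈ LinearMap.ker (LinearMap.proj i : (Fin 3 → ℂ) →ₗ[ℂ] ℂ),
        (Q⁻¹ * B * Q) *ᵥ x ∈ LinearMap.ker (LinearMap.proj i : (Fin 3 → ℂ) →ₗ[ℂ] ℂ) := by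
      intro x hx
      simp only [LinearMap.mem_ker, LinearMap.proj_apply] at hx ⊢
      rw [hB1, hD, Matrix.mulVec_diagonal, hx, mul_zero]
    rcases hirr1 _ hinv1 hinv2 with h | h
    · set i' : Fin 3 := if i = 0 then 1 else 0 with hi'
      have hii' : i' ≠ i := by fin_cases i <;> simp [hi']
      have h7 : (Pi.single i' 1 : Fin 3 → ℂ) ∈ LinearMap.ker (LinearMap.proj i : (Fin 3 → ℂ) →ₗ[ℂ] ℂ) := by
        simp [LinearMap.mem_ker, Pi.single_apply, hii']
      rw [h] at h7
      have h9 := congrFun ((Submodule.mem_bot ℂ).mp h7) i'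
      simp at h9
    · have h8 : (Pi.single i 1 : Fin 3 → ℂ) ∈ LinearMap.ker (LinearMap.proj i : (Fin 3 → ℂ) →ₗ[ℂ] ℂ) := by
        rw [h]; trivial
      simp [LinearMap.mem_ker] at h8
  -- rescaling
  set R : Matrix (Fin 3) (Fin 3) ℂ := Matrix.diagonal a with hR
  have hRdet : IsUnit R.det := by
    rw [hR, Matrix.det_diagonal, isUnit_iff_ne_zero]
    exact Finset.prod_ne_zero_iff.mpr fun i _ => hane i
  have hRinv : R⁻¹ = Matrix.diagonal (fun i => (a i)⁻¹) := by
    apply Matrix.inv_eq_right_inv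
    rw [hR, Matrix.diagonal_mul_diagonal]
    have : (fun i => a i * (a i)⁻¹) = fun _ => (1 : ℂ) := by
      funext i; exact mul_inv_cancel₀ (hane i)
    rw [this, Matrix.diagonal_one]
  set S : Matrix (Fin 3) (Fin 3) ℂ := R⁻¹ * Q⁻¹ with hS
  have hSdet : IsUnit S.det := by
    rw [hS, Matrix.det_mul]
    exact (Matrix.isUnit_nonsing_inv_det _ hRdet).mul (Matrix.isUnit_nonsing_inv_det _ hQ)
  have hSinv : S⁻¹ = Q * R := by
    rw [hS, Matrix.mul_inv_rev, Matrix.nonsing_inv_nonsing_inv _ hQ,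
      Matrix.nonsing_inv_nonsing_inv _ hRdet]
  set c : Fin 3 → ℂ := fun i => b i * a i with hc
  have hones : R⁻¹ *ᵥ a = fun _ => (1 : ℂ) := by
    rw [hRinv]
    funext i
    rw [Matrix.mulVec_diagonal]
    exact inv_mul_cancel₀ (hane i)
  have hbR : b ᵥ* R = c := by
    rw [hR]
    funext i
    rw [Matrix.vecMul_diagonal]
  have hSA : S * A * S⁻¹ = (starRingEnd ℂ u) • (1 : Matrix (Fin 3) (Fin 3) ℂ)
      + (u ^ 2 - starRingEnd ℂ u) • vecMulVec (fun _ => 1) c := by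
    have e1 : S * A * S⁻¹ = R⁻¹ * (Q⁻¹ * A * Q) * R := by
      rw [hSinv, hS]; simp only [Matrix.mul_assoc]
    rw [e1, hA1, Matrix.mul_add, Matrix.add_mul]
    refine congrArg₂ (· + ·) ?_ ?_
    · rw [mul_smul_comm, smul_mul_assoc, mul_one, Matrix.nonsing_inv_mul _ hRdet]
    · rw [mul_smul_comm, smul_mul_assoc, aux_conj_outer, hones, hbR]
  have hSB : S * B * S⁻¹ = D := by
    have e1 : S * B * S⁻¹ = R⁻¹ * (Q⁻¹ * B * Q) * R := by
      rw [hSinv, hS]; simp only [Matrix.mul_assoc]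
    rw [e1, hB1, hRinv, hR, hD, Matrix.diagonal_mul_diagonal, Matrix.diagonal_mul_diagonal]
    apply congrArg Matrix.diagonal
    funext i
    field_simp [hane i]
  have hcsum : c 0 + c 1 + c 2 = 1 := by
    have : b ⬝ᵥ a = b 0 * a 0 + b 1 * a 1 + b 2 * a 2 := by
      simp [dotProduct, Fin.sum_univ_three]
    rw [this] at hba
    simpa [hc] using hba
  -- determinant of B
  have hDdet : IsUnit D.det := by
    rw [hD, Matrix.det_diagonal, Fin.prod_univ_three, isUnit_iff_ne_zero]
    simp only [Matrix.cons_val_zero, Matrix.cons_val_one, Matrix.head_cons, Matrix.cons_val_two,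
      Matrix.tail_cons]
    intro h
    rw [one_mul] at h
    rw [hωω] at h
    norm_num at h
  have hBdet : IsUnit B.det := by
    have : B.det = D.det := by
      rw [hBQ, Matrix.det_mul, Matrix.det_mul, mul_comm, ← mul_assoc, ← Matrix.det_mul,
        Matrix.nonsing_inv_mul _ hQ, Matrix.det_one, one_mul]
    rw [this]; exact hDdet
  -- inverse of D
  have hDinv : D⁻¹ = Matrix.diagonal ![1, starRingEnd ℂ ω, ω] := by
    apply Matrix.inv_eq_right_inv
    rw [hD, Matrix.diagonal_mul_diagonal]
    have : (fun i => (![1, ω, starRingEnd ℂ ω] : Fin 3 → ℂ) i * ![1, starRingEnd ℂ ω, ω] i)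
        = fun _ => (1 : ℂ) := by
      funext i
      fin_cases i <;> simp [hωω]
      rw [mul_comm]; exact hωω
    rw [this, Matrix.diagonal_one]
  -- trace computations
  have htrconj : ∀ M N : Matrix (Fin 3) (Fin 3) ℂ, ((S * M * S⁻¹) * (S * N * S⁻¹)).trace
      = (M * N).trace := by
    intro M N
    have e1 : (S * M * S⁻¹) * (S * N * S⁻¹) = S * (M * N) * S⁻¹ := by
      calc (S * M * S⁻¹) * (S * N * S⁻¹) = S * (M * ((S⁻¹ * S) * (N * S⁻¹))) := by
            simp only [Matrix.mul_assoc]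
      _ = S * (M * N) * S⁻¹ := by
            rw [Matrix.nonsing_inv_mul _ hSdet, Matrix.one_mul]
            simp only [Matrix.mul_assoc]
    rw [e1, aux_trace_conj _ _ hSdet]
  have hSBinv : (S * B * S⁻¹)⁻¹ = S * B⁻¹ * S⁻¹ := by
    apply Matrix.inv_eq_right_inv
    calc (S * B * S⁻¹) * (S * B⁻¹ * S⁻¹) = S * (B * (S⁻¹ * S * (B⁻¹ * S⁻¹))) := by
          simp only [Matrix.mul_assoc]
    _ = S * (B * (B⁻¹ * S⁻¹)) := by rw [Matrix.nonsing_inv_mul _ hSdet, Matrix.one_mul]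
    _ = S * S⁻¹ := by rw [Matrix.mul_nonsing_inv_cancel_left _ _ hBdet]
    _ = 1 := Matrix.mul_nonsing_inv _ hSdet
  have htrace1 : (starRingEnd ℂ u) * (1 + ω + starRingEnd ℂ ω)
      + (u ^ 2 - starRingEnd ℂ u) * (c 0 * 1 + c 1 * ω + c 2 * starRingEnd ℂ ω) = τ := by
    rw [← htr1, ← htrconj A B, hSA, hSB, hD]
    simp [Matrix.trace, Matrix.diag, Matrix.mul_apply, Fin.sum_univ_three,
      Matrix.vecMulVec_apply, Matrix.diagonal_apply, Matrix.one_apply]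
    ring
  have htrace2 : (starRingEnd ℂ u) * (1 + starRingEnd ℂ ω + ω)
      + (u ^ 2 - starRingEnd ℂ u) * (c 0 * 1 + c 1 * starRingEnd ℂ ω + c 2 * ω) = τ' := by
    rw [← htr2, ← htrconj A B⁻¹]
    have e2 : S * B⁻¹ * S⁻¹ = D⁻¹ := by rw [← hSBinv, hSB]
    rw [hSA, e2, hDinv]
    simp [Matrix.trace, Matrix.diag, Matrix.mul_apply, Fin.sum_univ_three,
      Matrix.vecMulVec_apply, Matrix.diagonal_apply, Matrix.one_apply]
    ring
  have hzero : 1 + ω + starRingEnd ℂ ω = 0 := by rw [hconj2]; exact hsum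
  refine ⟨S, c, hSdet, hSA, hSB, hcsum, ?_, ?_⟩
  · linear_combination htrace1 - (starRingEnd ℂ u) * hzero
  · linear_combination htrace2 - (starRingEnd ℂ u) * hzero

set_option maxHeartbeats 1000000 in
/-- Two irreducible pairs of 3×3 complex matrices with the prescribed
characteristic polynomials and pair-traces are simultaneously conjugate. -/
theorem stmt_0 (u τ τ' : ℂ) (hu : ‖u‖ = 1) (hu3 : u ^ 3 ≠ 1)
    (ω : ℂ) (hω : ω = (-1 + Complex.I * Real.sqrt 3) / 2)
    (A B A' B' : Matrix (Fin 3) (Fin 3) ℂ)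
    -- A and A' are diagonalizable
    (hAdiag : ∃ P : Matrix (Fin 3) (Fin 3) ℂ, IsUnit P.det ∧
      ∃ d : Fin 3 → ℂ, A = P * Matrix.diagonal d * P⁻¹)
    (hA'diag : ∃ P : Matrix (Fin 3) (Fin 3) ℂ, IsUnit P.det ∧
      ∃ d : Fin 3 → ℂ, A' = P * Matrix.diagonal d * P⁻¹)
    -- characteristic polynomials
    (hAcp : A.charpoly = (X - C (u ^ 2)) * (X - C (starRingEnd ℂ u)) ^ 2)
    (hA'cp : A'.charpoly = (X - C (u ^ 2)) * (X - C (starRingEnd ℂ u)) ^ 2)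
    (hBcp : B.charpoly = (X - C 1) * (X - C ω) * (X - C (starRingEnd ℂ ω)))
    (hB'cp : B'.charpoly = (X - C 1) * (X - C ω) * (X - C (starRingEnd ℂ ω)))
    -- trace conditions
    (htr1 : (A * B).trace = τ) (htr1' : (A' * B').trace = τ)
    (htr2 : (A * B⁻¹).trace = τ') (htr2' : (A' * B'⁻¹).trace = τ')
    -- irreducibility: no common invariant subspace other than 0 and ℂ³
    (hirr : ∀ W : Submodule ℂ (Fin 3 → ℂ),
      (∀ x ∈ W, A.mulVec x ∈ W) → (∀ x ∈ W, B.mulVec x ∈ W) → W = ⊥ ∨ W = ⊤)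
    (hirr' : ∀ W : Submodule ℂ (Fin 3 → ℂ),
      (∀ x ∈ W, A'.mulVec x ∈ W) → (∀ x ∈ W, B'.mulVec x ∈ W) → W = ⊥ ∨ W = ⊤) :
    ∃ S : Matrix (Fin 3) (Fin 3) ℂ, IsUnit S.det ∧
      A' = S * A * S⁻¹ ∧ B' = S * B * S⁻¹ := by
  obtain ⟨S, c, hS, hSA, hSB, hc1, hc2, hc3⟩ :=
    aux_key u τ τ' ω hu hu3 hω A B hAdiag hAcp hBcp htr1 htr2 hirr
  obtain ⟨S', c', hS', hSA', hSB', hc1', hc2', hc3'⟩ :=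
    aux_key u τ τ' ω hu hu3 hω A' B' hA'diag hA'cp hB'cp htr1' htr2' hirr'
  obtain ⟨hconj2, hsum⟩ := aux_omega ω hω
  obtain ⟨huc, hα⟩ := aux_u u hu hu3
  have hω3 : ω ^ 3 = 1 := by linear_combination (ω - 1) * hsum
  have hcc : c = c' := by
    have e1 : c 0 + c 1 + c 2 = c' 0 + c' 1 + c' 2 := by rw [hc1, hc1']
    have e2 : (u ^ 2 - starRingEnd ℂ u) * (c 0 + ω * c 1 + starRingEnd ℂ ω * c 2)
        = (u ^ 2 - starRingEnd ℂ u) * (c' 0 + ω * c' 1 + starRingEnd ℂ ω * c' 2) := by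
      rw [hc2, hc2']
    have e3 : (u ^ 2 - starRingEnd ℂ u) * (c 0 + starRingEnd ℂ ω * c 1 + ω * c 2)
        = (u ^ 2 - starRingEnd ℂ u) * (c' 0 + starRingEnd ℂ ω * c' 1 + ω * c' 2) := by
      rw [hc3, hc3']
    rw [hconj2] at e2 e3
    have f2 : c 0 + ω * c 1 + ω ^ 2 * c 2 = c' 0 + ω * c' 1 + ω ^ 2 * c' 2 :=
      mul_left_cancel₀ hα e2
    have f3 : c 0 + ω ^ 2 * c 1 + ω * c 2 = c' 0 + ω ^ 2 * c' 1 + ω * c' 2 :=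
      mul_left_cancel₀ hα e3
    have h3 : (3 : ℂ) ≠ 0 := by norm_num
    funext i
    fin_cases i
    · have h30 : (3 : ℂ) * (c 0 - c' 0) = 0 := by
        linear_combination e1 + f2 + f3 - (c 1 - c' 1 + c 2 - c' 2) * hsum
      have := mul_eq_zero.mp h30
      simp only [h3, false_or] at this
      exact sub_eq_zero.mp this
    · have h30 : (3 : ℂ) * (c 1 - c' 1) = 0 := by
        linear_combination e1 + ω ^ 2 * f2 + ω * f3 - (c 0 - c' 0) * hsum
          - 2 * (c 1 - c' 1) * hω3 - (c 2 - c' 2) * hsum - ω * (c 2 - c' 2) * hω3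
      have := mul_eq_zero.mp h30
      simp only [h3, false_or] at this
      exact sub_eq_zero.mp this
    · have h30 : (3 : ℂ) * (c 2 - c' 2) = 0 := by
        linear_combination e1 + ω * f2 + ω ^ 2 * f3 - (c 0 - c' 0) * hsum
          - (c 1 - c' 1) * hsum - ω * (c 1 - c' 1) * hω3 - 2 * (c 2 - c' 2) * hω3
      have := mul_eq_zero.mp h30
      simp only [h3, false_or] at this
      exact sub_eq_zero.mp this
  have hAA : S' * A' * S'⁻¹ = S * A * S⁻¹ := by rw [hSA, hSA', hcc]
  have hBB : S' * B' * S'⁻¹ = S * B * S⁻¹ := by rw [hSB, hSB']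
  set T : Matrix (Fin 3) (Fin 3) ℂ := S'⁻¹ * S with hT
  have hTdet : IsUnit T.det := by
    rw [hT, Matrix.det_mul]
    exact (Matrix.isUnit_nonsing_inv_det _ hS').mul hS
  have hTinv : T⁻¹ = S⁻¹ * S' := by
    apply Matrix.inv_eq_right_inv
    calc (S'⁻¹ * S) * (S⁻¹ * S') = S'⁻¹ * (S * S⁻¹ * S') := by simp only [Matrix.mul_assoc]
    _ = S'⁻¹ * S' := by rw [Matrix.mul_nonsing_inv _ hS, Matrix.one_mul]
    _ = 1 := Matrix.nonsing_inv_mul _ hS'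
  have hcancel : ∀ M : Matrix (Fin 3) (Fin 3) ℂ, S'⁻¹ * (S' * M * S'⁻¹) * S' = M := by
    intro M
    calc S'⁻¹ * (S' * M * S'⁻¹) * S' = S'⁻¹ * (S' * (M * (S'⁻¹ * S'))) := by
          simp only [Matrix.mul_assoc]
    _ = S'⁻¹ * (S' * (M * 1)) := by rw [Matrix.nonsing_inv_mul _ hS']
    _ = S'⁻¹ * (S' * M) := by rw [Matrix.mul_one]
    _ = M := Matrix.nonsing_inv_mul_cancel_left _ _ hS'
  refine ⟨T, hTdet, ?_, ?_⟩
  · have e4 : T * A * T⁻¹ = S'⁻¹ * (S * A * S⁻¹) * S' := by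
      rw [hTinv, hT]; simp only [Matrix.mul_assoc]
    rw [e4, ← hAA, hcancel]
  · have e4 : T * B * T⁻¹ = S'⁻¹ * (S * B * S⁻¹) * S' := by
      rw [hTinv, hT]; simp only [Matrix.mul_assoc]
    rw [e4, ← hBB, hcancel]
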